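/- arXiv:1010.3162 — 2 statements merged into one kernel-verified Lean document; each statement's English description precedes it below -/
import Mathlib

section
/- Let T be an irrational rotation of the unit circle with uniform measure μ, and for each x let C_x = {T^i x : i ∈ ℤ} be the orbit of x. Then the family C = {C_x : x} has VC dimension 1, each C_x has μ-measure 0, and for the stationary ergodic process X_i = T^i X₀ with X₀ ∼ μ, sup_{C∈C} |m^{-1}∑_{i=1}^m 1{X_i ∈ C} − μ(C)| = 1 almost surely for every m ≥ 1; hence the uniform law of large numbers fails for this uncountable VC class. -/
open MeasureTheory Filter

/-- A family of sets `C` shatters a finite set `D` if every subset of `D`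
is the trace of some member of `C` on `D`. -/
def Shatters {X : Type*} (C : Set (Set X)) (D : Finset X) : Prop :=
  ∀ S ⊆ (D : Set X), ∃ c ∈ C, c ∩ (D : Set X) = S

/-- The orbit of a point `x` of the unit circle under rotation by `α`. -/
def rotOrbit (α : ℝ) (x : UnitAddCircle) : Set UnitAddCircle :=
  {y | ∃ i : ℤ, y = x + i • (α : UnitAddCircle)}

lemma mem_rotOrbit_self (α : ℝ) (x : UnitAddCircle) : x ∈ rotOrbit α x :=
  ⟨0, by simp⟩

lemma rotOrbit_eq_of_mem {α : ℝ} {x y : UnitAddCircle} (h : y ∈ rotOrbit α x) :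
    rotOrbit α y = rotOrbit α x := by
  obtain ⟨i, rfl⟩ := h
  ext z
  constructor
  · rintro ⟨j, rfl⟩
    exact ⟨i + j, by rw [add_zsmul]; abel⟩
  · rintro ⟨j, rfl⟩
    exact ⟨j - i, by rw [sub_zsmul]; abel⟩

lemma rotOrbit_countable (α : ℝ) (x : UnitAddCircle) : (rotOrbit α x).Countable := by
  have : rotOrbit α x = Set.range (fun i : ℤ => x + i • (α : UnitAddCircle)) := by
    ext z; simp [rotOrbit, eq_comm]
  rw [this]; exact Set.countable_range _

instance : NullSingletonClass (volume : Measure UnitAddCircle) := by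
  constructor
  intro x
  have h := AddCircle.volume_closedBall (T := 1) (x := x) 0
  simpa [Metric.closedBall_zero] using h

lemma rotOrbit_null (α : ℝ) (x : UnitAddCircle) : volume (rotOrbit α x) = 0 :=
  (rotOrbit_countable α x).measure_zero _

lemma exists_not_mem_rotOrbit (α : ℝ) (x : UnitAddCircle) :
    ∃ y, y ∉ rotOrbit α x := by
  by_contra h
  push_neg at h
  have : (Set.univ : Set UnitAddCircle) = rotOrbit α x := by
    ext z; simpa using h z
  have h1 : volume (Set.univ : Set UnitAddCircle) = 0 := by
    rw [this]; exact rotOrbit_null α x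
  simp [AddCircle.measure_univ] at h1

/-- For an irrational rotation `T` of the unit circle with uniform measure `μ`, the
family `C = {C_x}` of orbits has VC dimension 1, each orbit is `μ`-null, and for the
stationary ergodic process `X_i = T^i X₀` with `X₀ ∼ μ`, the uniform empirical deviation
over `C` equals 1 almost surely for every `m ≥ 1`: the uniform law of large numbers fails
for this uncountable VC class. -/
theorem rotation_orbits_ulln_fails (α : ℝ) (hα : Irrational α)
    {Ω : Type*} [MeasurableSpace Ω] (P : Measure Ω) [IsProbabilityMeasure P]
    (X₀ : Ω → UnitAddCircle) (hX₀ : Measurable X₀)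
    (hunif : Measure.map X₀ P = volume)
    (X : ℕ → Ω → UnitAddCircle) (hX : ∀ i ω, X i ω = X₀ ω + (i : ℤ) • (α : UnitAddCircle)) :
    ((∃ D : Finset UnitAddCircle, D.card = 1 ∧ Shatters (Set.range (rotOrbit α)) D) ∧
      (∀ D : Finset UnitAddCircle, Shatters (Set.range (rotOrbit α)) D → D.card ≤ 1)) ∧
    (∀ x : UnitAddCircle, volume (rotOrbit α x) = 0) ∧
    (∀ m : ℕ, 1 ≤ m → ∀ᵐ ω ∂P,
      (⨆ x : UnitAddCircle, |(∑ i ∈ Finset.range m,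
          Set.indicator (rotOrbit α x) (fun _ => (1 : ℝ)) (X i ω)) / m
        - (volume (rotOrbit α x)).toReal|) = 1) := by
  refine ⟨⟨⟨{0}, rfl, ?_⟩, ?_⟩, rotOrbit_null α, ?_⟩
  · -- a singleton is shattered
    intro S hS
    simp only [Finset.coe_singleton] at hS ⊢
    by_cases h0 : (0 : UnitAddCircle) ∈ S
    · have hSeq : S = {0} := le_antisymm hS (by simpa using h0)
      refine ⟨rotOrbit α 0, ⟨0, rfl⟩, ?_⟩
      rw [hSeq]
      exact Set.inter_eq_right.mpr (by simpa using mem_rotOrbit_self α 0)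
    · have hSeq : S = ∅ := by
        ext z; simp only [Set.mem_empty_iff_false, iff_false]
        intro hz; have := hS hz; simp at this; subst this; exact h0 hz
      obtain ⟨y, hy⟩ := exists_not_mem_rotOrbit α 0
      refine ⟨rotOrbit α y, ⟨y, rfl⟩, ?_⟩
      rw [hSeq, Set.eq_empty_iff_forall_notMem]
      rintro z ⟨hz1, hz2⟩
      simp only [Set.mem_singleton_iff] at hz2
      subst hz2
      exact hy ((rotOrbit_eq_of_mem hz1) ▸ mem_rotOrbit_self α y)
  · -- no 2-point set is shattered
    intro D hD
    by_contra hcard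
    push_neg at hcard
    obtain ⟨a, ha, b, hb, hab⟩ := Finset.one_lt_card.mp hcard
    obtain ⟨c, ⟨z, rfl⟩, hc⟩ := hD {a} (by simpa using ha)
    obtain ⟨c', ⟨z', rfl⟩, hc'⟩ := hD {a, b} (by
      rintro w hw; simp only [Set.mem_insert_iff, Set.mem_singleton_iff] at hw
      rcases hw with rfl | rfl <;> simpa)
    have hac : a ∈ rotOrbit α z := by
      have : a ∈ rotOrbit α z ∩ (D : Set UnitAddCircle) := hc ▸ rfl
      exact this.1
    have hac' : a ∈ rotOrbit α z' := by
      have : a ∈ rotOrbit α z' ∩ (D : Set UnitAddCircle) := by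
        rw [hc']; exact Set.mem_insert a {b}
      exact this.1
    have hbc' : b ∈ rotOrbit α z' := by
      have : b ∈ rotOrbit α z' ∩ (D : Set UnitAddCircle) := by
        rw [hc']; exact Set.mem_insert_iff.mpr (Or.inr rfl)
      exact this.1
    have heq : rotOrbit α z = rotOrbit α z' := by
      rw [← rotOrbit_eq_of_mem hac, ← rotOrbit_eq_of_mem hac']
    have hbD : b ∈ rotOrbit α z ∩ (D : Set UnitAddCircle) := ⟨heq ▸ hbc', hb⟩
    rw [hc] at hbD
    exact hab (hbD.symm)
  · -- the sup equals 1 everywhere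
    intro m hm
    refine Eventually.of_forall fun ω => ?_
    set f : UnitAddCircle → ℝ := fun x =>
      |(∑ i ∈ Finset.range m,
          Set.indicator (rotOrbit α x) (fun _ => (1 : ℝ)) (X i ω)) / m
        - (volume (rotOrbit α x)).toReal| with hf
    have hm0 : (0 : ℝ) < m := by exact_mod_cast hm
    have hfle : ∀ x, f x ≤ 1 := by
      intro x
      have hsum_le : (∑ i ∈ Finset.range m,
          Set.indicator (rotOrbit α x) (fun _ => (1 : ℝ)) (X i ω)) ≤ m := by
        calc (∑ i ∈ Finset.range m,
            Set.indicator (rotOrbit α x) (fun _ => (1 : ℝ)) (X i ω))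
            ≤ ∑ i ∈ Finset.range m, (1 : ℝ) := by
              refine Finset.sum_le_sum fun i _ => ?_
              exact Set.indicator_le' (fun _ _ => le_refl 1) (fun _ _ => zero_le_one) _
          _ = m := by simp
      have hsum_nonneg : (0 : ℝ) ≤ ∑ i ∈ Finset.range m,
          Set.indicator (rotOrbit α x) (fun _ => (1 : ℝ)) (X i ω) :=
        Finset.sum_nonneg fun i _ => Set.indicator_nonneg (fun _ _ => zero_le_one) _
      rw [hf]
      simp only [rotOrbit_null α x, ENNReal.toReal_zero, sub_zero]
      rw [abs_of_nonneg (div_nonneg hsum_nonneg hm0.le)]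
      rw [div_le_one hm0]
      exact hsum_le
    have hfX : f (X₀ ω) = 1 := by
      have hmem : ∀ i ∈ Finset.range m, X i ω ∈ rotOrbit α (X₀ ω) :=
        fun i _ => ⟨(i : ℤ), hX i ω⟩
      have hsum : (∑ i ∈ Finset.range m,
          Set.indicator (rotOrbit α (X₀ ω)) (fun _ => (1 : ℝ)) (X i ω)) = m := by
        rw [Finset.sum_congr rfl fun i hi => Set.indicator_of_mem (hmem i hi) _]
        simp
      rw [hf]
      simp only [hsum, rotOrbit_null α (X₀ ω), ENNReal.toReal_zero, sub_zero,
        div_self hm0.ne', abs_one]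
    refine le_antisymm (ciSup_le hfle) ?_
    calc (1 : ℝ) = f (X₀ ω) := hfX.symm
      _ ≤ ⨆ x, f x := le_ciSup ⟨1, fun y ⟨x, hx⟩ => hx ▸ hfle x⟩ (X₀ ω)
end

section
/- Let C₁, C₂, … be Borel subsets of [0,1] such that the maximal diameter of the cells of the join J_n = ⋁_{i=1}^n C_i tends to 0 as n → ∞. Then there exists a Borel measurable map φ : [0,1] → [0,1] and a Borel set V₁ of Lebesgue measure one such that φ preserves Lebesgue measure, φ is one-to-one on V₁ with Borel image V₂ = φ(V₁) and Borel measurable inverse φ^{-1} : V₂ → V₁ which also preserves Lebesgue measure, and for every C in the collection there is a finite union of intervals U(C) with λ(φ(C) △ U(C)) = 0. -/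
open MeasureTheory

/-- The cell of the join `J_n = ⋁_{i<n} C_i` (within `[0,1]`) corresponding to a sign
pattern `ε`. -/
def joinCell (C : ℕ → Set ℝ) (n : ℕ) (ε : Fin n → Bool) : Set ℝ :=
  Set.Icc (0 : ℝ) 1 ∩ ⋂ i : Fin n, if ε i then C i.1 else (C i.1)ᶜ

namespace IsoAux

open Set Filter Topology

noncomputable section

open Classical in
/-- The pattern of membership of `x` in the sets `C i`. -/
def pat (C : ℕ → Set ℝ) (x : ℝ) (i : ℕ) : Bool := decide (x ∈ C i)

/-- Digit weights. -/
def w (i : ℕ) : ℝ := 2 / 3 ^ (i + 1)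

def dig (b : Bool) (i : ℕ) : ℝ := if b then w i else 0

def sfin (p : ℕ → Bool) (n : ℕ) : ℝ := ∑ j ∈ Finset.range n, dig (p j) j

/-- The Cantor-like coding map. -/
def G (C : ℕ → Set ℝ) (x : ℝ) : ℝ := ∑' i, dig (pat C x i) i

lemma pat_true {C : ℕ → Set ℝ} {x : ℝ} {i : ℕ} : pat C x i = true ↔ x ∈ C i := by
  simp [pat]

lemma pat_false {C : ℕ → Set ℝ} {x : ℝ} {i : ℕ} : pat C x i = false ↔ x ∉ C i := by
  simp [pat]

lemma w_pos (i : ℕ) : 0 < w i := by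
  unfold w; positivity

lemma w_eq (i : ℕ) : w i = (2 / 3) * (1 / 3 : ℝ) ^ i := by
  have h : (3 : ℝ) ^ i ≠ 0 := by positivity
  rw [w, div_pow, one_pow, pow_succ]
  field_simp

lemma dig_nonneg (b : Bool) (i : ℕ) : 0 ≤ dig b i := by
  cases b <;> simp [dig, (w_pos i).le]

lemma dig_le_w (b : Bool) (i : ℕ) : dig b i ≤ w i := by
  cases b <;> simp [dig, (w_pos i).le]

lemma summable_w : Summable w := by
  have : Summable (fun i : ℕ => (2 / 3) * (1 / 3 : ℝ) ^ i) :=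
    (summable_geometric_of_lt_one (by norm_num) (by norm_num)).mul_left _
  exact this.congr fun i => (w_eq i).symm

lemma tsum_w_add (n : ℕ) : ∑' j, w (j + n) = 1 / 3 ^ n := by
  have h1 : ∀ j : ℕ, w (j + n) = ((2 / 3) * (1 / 3 : ℝ) ^ n) * (1 / 3 : ℝ) ^ j := by
    intro j; rw [w_eq, pow_add]; ring
  calc ∑' j, w (j + n) = ∑' j, ((2 / 3) * (1 / 3 : ℝ) ^ n) * (1 / 3 : ℝ) ^ j := by
        simp only [h1]
    _ = ((2 / 3) * (1 / 3 : ℝ) ^ n) * (1 - 1 / 3 : ℝ)⁻¹ := by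
        rw [tsum_mul_left, tsum_geometric_of_lt_one (by norm_num) (by norm_num)]
    _ = 1 / 3 ^ n := by
        have h : (3 : ℝ) ^ n ≠ 0 := by positivity
        rw [one_div, inv_pow]
        field_simp
        ring

lemma summable_dig (p : ℕ → Bool) : Summable (fun i => dig (p i) i) :=
  Summable.of_nonneg_of_le (fun i => dig_nonneg _ _) (fun i => dig_le_w _ _) summable_w

lemma G_split (C : ℕ → Set ℝ) (x : ℝ) (n : ℕ) :
    G C x = sfin (pat C x) n + ∑' j, dig (pat C x (j + n)) (j + n) :=
  (Summable.sum_add_tsum_nat_add n (summable_dig _)).symm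

lemma tail_nonneg (p : ℕ → Bool) (n : ℕ) : 0 ≤ ∑' j, dig (p (j + n)) (j + n) :=
  tsum_nonneg fun j => dig_nonneg _ _

lemma tail_le (p : ℕ → Bool) (n : ℕ) : ∑' j, dig (p (j + n)) (j + n) ≤ 1 / 3 ^ n := by
  have hs2 : Summable (fun j => w (j + n)) :=
    summable_w.comp_injective (add_left_injective n)
  have hs1 : Summable (fun j => dig (p (j + n)) (j + n)) :=
    Summable.of_nonneg_of_le (fun j => dig_nonneg _ _) (fun j => dig_le_w _ _) hs2
  calc ∑' j, dig (p (j + n)) (j + n) ≤ ∑' j, w (j + n) :=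
        Summable.tsum_le_tsum (fun j => dig_le_w _ _) hs1 hs2
    _ = 1 / 3 ^ n := tsum_w_add n

lemma G_ge (C : ℕ → Set ℝ) (x : ℝ) (n : ℕ) : sfin (pat C x) n ≤ G C x := by
  rw [G_split C x n]; linarith [tail_nonneg (pat C x) n]

lemma G_le (C : ℕ → Set ℝ) (x : ℝ) (n : ℕ) : G C x ≤ sfin (pat C x) n + 1 / 3 ^ n := by
  rw [G_split C x n]; linarith [tail_le (pat C x) n]

lemma sfin_succ (p : ℕ → Bool) (n : ℕ) : sfin p (n + 1) = sfin p n + dig (p n) n :=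
  Finset.sum_range_succ _ _

lemma G_ge_true {C : ℕ → Set ℝ} {x : ℝ} {n : ℕ} (h : pat C x n = true) :
    sfin (pat C x) n + 2 / 3 ^ (n + 1) ≤ G C x := by
  have h1 := G_ge C x (n + 1)
  rw [sfin_succ, h] at h1
  simpa [dig, w] using h1

lemma G_le_false {C : ℕ → Set ℝ} {x : ℝ} {n : ℕ} (h : pat C x n = false) :
    G C x ≤ sfin (pat C x) n + 1 / 3 ^ (n + 1) := by
  have h1 := G_le C x (n + 1)
  rw [sfin_succ, h] at h1
  simpa [dig] using h1

lemma sum_w_range (n : ℕ) : ∑ j ∈ Finset.range n, w j = 1 - 1 / 3 ^ n := by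
  induction n with
  | zero => simp
  | succ n ih =>
      rw [Finset.sum_range_succ, ih, w]
      have h : (3 : ℝ) ^ n ≠ 0 := by positivity
      field_simp [pow_succ]
      ring

lemma sfin_mono_le (p : ℕ → Bool) {j n : ℕ} (h : j ≤ n) : sfin p j ≤ sfin p n :=
  Finset.sum_le_sum_of_subset_of_nonneg (Finset.range_subset_range.2 h)
    (fun k _ _ => dig_nonneg _ _)

lemma sfin_le (p : ℕ → Bool) {j n : ℕ} (h : j ≤ n) :
    sfin p n ≤ sfin p j + (1 / 3 ^ j - 1 / 3 ^ n) := by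
  have hsplit : sfin p j + ∑ k ∈ Finset.Ico j n, dig (p k) k = sfin p n := by
    simp only [sfin, Finset.range_eq_Ico]
    exact Finset.sum_Ico_consecutive _ (Nat.zero_le j) h
  have hbound : ∑ k ∈ Finset.Ico j n, dig (p k) k ≤ 1 / 3 ^ j - 1 / 3 ^ n := by
    calc ∑ k ∈ Finset.Ico j n, dig (p k) k ≤ ∑ k ∈ Finset.Ico j n, w k :=
          Finset.sum_le_sum fun k _ => dig_le_w _ _
      _ = ∑ k ∈ Finset.range n, w k - ∑ k ∈ Finset.range j, w k :=
          Finset.sum_Ico_eq_sub _ h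
      _ = 1 / 3 ^ j - 1 / 3 ^ n := by rw [sum_w_range, sum_w_range]; ring
  linarith

lemma sep {p q : ℕ → Bool} {j n : ℕ} (hjn : j < n) (hpj : p j = false) (hqj : q j = true)
    (hpre : ∀ k, k < j → p k = q k) :
    sfin p n + 1 / 3 ^ (j + 1) + 1 / 3 ^ n ≤ sfin q n := by
  have hq1 : sfin q (j + 1) ≤ sfin q n := sfin_mono_le q hjn
  have hq2 : sfin q (j + 1) = sfin q j + w j := by rw [sfin_succ, hqj]; rfl
  have hp1 : sfin p n ≤ sfin p (j + 1) + (1 / 3 ^ (j + 1) - 1 / 3 ^ n) := sfin_le p hjn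
  have hp2 : sfin p (j + 1) = sfin p j := by rw [sfin_succ, hpj]; simp [dig]
  have hpq : sfin p j = sfin q j :=
    Finset.sum_congr rfl fun k hk => by rw [hpre k (Finset.mem_range.1 hk)]
  have hw : w j = 2 / 3 ^ (j + 1) := rfl
  have h2 : (2 : ℝ) / 3 ^ (j + 1) = 1 / 3 ^ (j + 1) + 1 / 3 ^ (j + 1) := by ring
  linarith

lemma sep' {p q : ℕ → Bool} {n : ℕ} (h : ∃ j, j < n ∧ p j ≠ q j) :
    sfin p n + 1 / 3 ^ n < sfin q n ∨ sfin q n + 1 / 3 ^ n < sfin p n := by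
  classical
  obtain ⟨j₁, hj₁n, hj₁⟩ := h
  have hex : ∃ j, p j ≠ q j := ⟨j₁, hj₁⟩
  set j := Nat.find hex with hjdef
  have hj : p j ≠ q j := Nat.find_spec hex
  have hjn : j < n := lt_of_le_of_lt (Nat.find_min' hex hj₁) hj₁n
  have hpre : ∀ k, k < j → p k = q k := fun k hk => not_ne_iff.1 (Nat.find_min hex hk)
  have hpos : (0 : ℝ) < 1 / 3 ^ (j + 1) := by positivity
  cases hb : p j with
  | false =>
      left
      have hq : q j = true := by revert hj; cases q j <;> simp [hb]
      have := sep hjn hb hq hpre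
      linarith
  | true =>
      right
      have hq : q j = false := by revert hj; cases q j <;> simp [hb]
      have := sep hjn hq hb (fun k hk => (hpre k hk).symm)
      linarith

lemma mem_joinCell_self {C : ℕ → Set ℝ} {x : ℝ} (hx : x ∈ Set.Icc (0:ℝ) 1) (n : ℕ) :
    x ∈ joinCell C n (fun i => pat C x i.1) := by
  refine ⟨hx, Set.mem_iInter.2 fun i => ?_⟩
  by_cases h : x ∈ C i.1
  · rw [if_pos (pat_true.2 h)]; exact h
  · rw [if_neg (by simp [pat_false.2 h])]; exact h

lemma pat_eq_imp_eq {C : ℕ → Set ℝ}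
    (hdiam : ∀ δ : ℝ, 0 < δ → ∃ N : ℕ, ∀ n ≥ N, ∀ ε : Fin n → Bool,
      EMetric.diam (joinCell C n ε) ≤ ENNReal.ofReal δ)
    {x y : ℝ} (hx : x ∈ Set.Icc (0:ℝ) 1) (hy : y ∈ Set.Icc (0:ℝ) 1)
    (hp : ∀ i, pat C x i = pat C y i) : x = y := by
  by_contra hne
  have hd : 0 < dist x y := dist_pos.2 hne
  obtain ⟨N, hN⟩ := hdiam (dist x y / 2) (by linarith)
  have hxc := mem_joinCell_self (C := C) hx N
  have hyc' := mem_joinCell_self (C := C) hy N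
  have hyc : y ∈ joinCell C N (fun i => pat C x i.1) := by
    have : (fun i : Fin N => pat C x i.1) = fun i : Fin N => pat C y i.1 :=
      funext fun i => hp i.1
    rw [this]; exact hyc'
  have h1 : edist x y ≤ ENNReal.ofReal (dist x y / 2) :=
    (EMetric.edist_le_diam_of_mem hxc hyc).trans (hN N le_rfl _)
  rw [edist_dist] at h1
  have h2 := (ENNReal.ofReal_le_ofReal_iff (by linarith)).1 h1
  linarith

lemma G_injOn {C : ℕ → Set ℝ}
    (hdiam : ∀ δ : ℝ, 0 < δ → ∃ N : ℕ, ∀ n ≥ N, ∀ ε : Fin n → Bool,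
      EMetric.diam (joinCell C n ε) ≤ ENNReal.ofReal δ) :
    Set.InjOn (G C) (Set.Icc (0:ℝ) 1) := by
  intro x hx y hy hG
  by_cases hp : ∀ i, pat C x i = pat C y i
  · exact pat_eq_imp_eq hdiam hx hy hp
  · exfalso
    push_neg at hp
    obtain ⟨j, hj⟩ := hp
    rcases sep' (p := pat C x) (q := pat C y) (n := j + 1) ⟨j, by omega, hj⟩ with h | h
    · have := G_le C x (j + 1); have := G_ge C y (j + 1); linarith
    · have := G_le C y (j + 1); have := G_ge C x (j + 1); linarith

/-- Extension of a finite pattern by `false`. -/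
def pe (i : ℕ) (p : Fin i → Bool) : ℕ → Bool := fun k => if h : k < i then p ⟨k, h⟩ else false

def aI (i : ℕ) (p : Fin i → Bool) : ℝ := sfin (pe i p) i + 2 / 3 ^ (i + 1)

def bI (i : ℕ) (p : Fin i → Bool) : ℝ := sfin (pe i p) i + 1 / 3 ^ i

/-- The Cantor-like carrier of the `i`-th digit. -/
def K (i : ℕ) : Set ℝ := ⋃ p : Fin i → Bool, Set.Icc (aI i p) (bI i p)

lemma measurableSet_K (i : ℕ) : MeasurableSet (K i) :=
  MeasurableSet.iUnion fun _ => measurableSet_Icc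

lemma sfin_pe_pat (C : ℕ → Set ℝ) (x : ℝ) (i : ℕ) :
    sfin (pe i (fun k : Fin i => pat C x k.1)) i = sfin (pat C x) i := by
  refine Finset.sum_congr rfl fun k hk => ?_
  have hk' := Finset.mem_range.1 hk
  simp [pe, hk']

lemma mem_K_of_mem {C : ℕ → Set ℝ} {x : ℝ} {i : ℕ} (hx : x ∈ C i) : G C x ∈ K i := by
  refine Set.mem_iUnion.2 ⟨fun k => pat C x k.1, ?_, ?_⟩
  · rw [aI, sfin_pe_pat]
    exact G_ge_true (pat_true.2 hx)
  · rw [bI, sfin_pe_pat]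
    exact G_le C x i

lemma not_mem_K {C : ℕ → Set ℝ} {x : ℝ} {i : ℕ} (hx : x ∉ C i) : G C x ∉ K i := by
  intro hmem
  obtain ⟨p, hp⟩ := Set.mem_iUnion.1 hmem
  obtain ⟨hp1, hp2⟩ := hp
  rw [aI] at hp1; rw [bI] at hp2
  have hfalse : pat C x i = false := pat_false.2 hx
  by_cases hpre : ∀ k, k < i → pe i p k = pat C x k
  · have h1 : sfin (pe i p) i = sfin (pat C x) i :=
      Finset.sum_congr rfl fun k hk => by rw [hpre k (Finset.mem_range.1 hk)]
    have h2 := G_le_false hfalse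
    have h3 : (1 : ℝ) / 3 ^ (i + 1) < 2 / 3 ^ (i + 1) := by
      have : (0 : ℝ) < 1 / 3 ^ (i + 1) := by positivity
      have he : (2 : ℝ) / 3 ^ (i + 1) = 1 / 3 ^ (i + 1) + 1 / 3 ^ (i + 1) := by ring
      linarith
    linarith
  · push_neg at hpre
    obtain ⟨k, hk, hne⟩ := hpre
    have hpos : (0 : ℝ) < 2 / 3 ^ (i + 1) := by positivity
    rcases sep' (p := pe i p) (q := pat C x) ⟨k, hk, hne⟩ with h | h
    · have := G_ge C x i; linarith
    · have := G_le C x i; linarith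

lemma preimage_K (C : ℕ → Set ℝ) (i : ℕ) : G C ⁻¹' (K i) = C i := by
  ext x
  constructor
  · intro h
    by_contra hx
    exact not_mem_K hx h
  · exact fun hx => mem_K_of_mem hx

lemma Ioc_disjoint {i : ℕ} {p q : Fin i → Bool} (hne : p ≠ q) :
    Disjoint (Set.Ioc (aI i p) (bI i p)) (Set.Ioc (aI i q) (bI i q)) := by
  have hex : ∃ j, j < i ∧ pe i p j ≠ pe i q j := by
    obtain ⟨k, hk⟩ := Function.ne_iff.1 hne
    exact ⟨k.1, k.isLt, by simpa [pe, k.isLt] using hk⟩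
  have hpos : (0 : ℝ) < 2 / 3 ^ (i + 1) := by positivity
  rcases sep' hex with h | h
  · rw [Set.disjoint_left]
    intro z hz1 hz2
    have := hz1.2; have := hz2.1
    rw [bI] at hz1; rw [aI] at hz2
    have h1 : z ≤ sfin (pe i p) i + 1 / 3 ^ i := hz1.2
    have h2 : sfin (pe i q) i + 2 / 3 ^ (i + 1) < z := hz2.1
    linarith
  · rw [Set.disjoint_left]
    intro z hz1 hz2
    rw [Set.mem_Ioc, aI, bI] at hz1 hz2
    linarith [hz1.1, hz2.2]

lemma G_meas {C : ℕ → Set ℝ} (hmeas : ∀ i, MeasurableSet (C i)) : Measurable (G C) := by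
  apply measurable_of_tendsto_metrizable (f := fun n x => sfin (pat C x) n)
  · intro n
    apply Finset.measurable_sum
    intro j _
    have h : (fun x => dig (pat C x j) j) = (C j).indicator (fun _ => w j) := by
      funext x
      by_cases h : x ∈ C j
      · simp [dig, pat_true.2 h, Set.indicator_of_mem h]
      · simp [dig, pat_false.2 h, Set.indicator_of_notMem h]
    rw [h]
    exact measurable_const.indicator (hmeas j)
  · rw [tendsto_pi_nhds]
    intro x
    exact (summable_dig (pat C x)).hasSum.tendsto_sum_nat

lemma G_mem_Icc (C : ℕ → Set ℝ) (x : ℝ) : G C x ∈ Set.Icc (0:ℝ) 1 := by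
  constructor
  · have := G_ge C x 0; simpa [sfin] using this
  · have := G_le C x 0; simpa [sfin] using this

/-- The cdf of an atomless probability measure pushes it forward to the uniform measure. -/
lemma map_cdf (ν : Measure ℝ) [IsProbabilityMeasure ν] (hatom : ∀ z, ν {z} = 0) :
    Measure.map (ProbabilityTheory.cdf ν) ν = volume.restrict (Set.Icc (0:ℝ) 1) := by
  set F := ProbabilityTheory.cdf ν with hF
  have hFmeas : Measurable F := F.mono.measurable
  have hcont : ∀ s, Function.leftLim F s = F s := by
    intro s
    have h1 : F.measure {s} = 0 := by
      rw [hF, ProbabilityTheory.measure_cdf]; exact hatom s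
    rw [StieltjesFunction.measure_singleton] at h1
    have h2 := F.mono.leftLim_le (le_refl s)
    rw [ENNReal.ofReal_eq_zero] at h1
    linarith
  haveI : IsFiniteMeasure (volume.restrict (Set.Icc (0:ℝ) 1)) := by
    constructor
    rw [Measure.restrict_apply_univ, Real.volume_Icc]
    simp
  haveI : IsProbabilityMeasure (Measure.map F ν) :=
    Measure.isProbabilityMeasure_map hFmeas.aemeasurable
  refine Measure.ext_of_Iic (Measure.map F ν) _ (fun t => ?_)
  rw [Measure.map_apply hFmeas measurableSet_Iic, Measure.restrict_apply measurableSet_Iic]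
  rcases lt_or_ge t 0 with ht | ht
  · have h1 : F ⁻¹' Set.Iic t = ∅ := by
      ext z
      simp only [Set.mem_preimage, Set.mem_Iic, Set.mem_empty_iff_false, iff_false, not_le]
      exact lt_of_lt_of_le ht (ProbabilityTheory.cdf_nonneg ν z)
    have h2 : Set.Iic t ∩ Set.Icc (0:ℝ) 1 = ∅ := by
      ext z
      simp only [Set.mem_inter_iff, Set.mem_Iic, Set.mem_Icc, Set.mem_empty_iff_false, iff_false]
      rintro ⟨h1', h2', _⟩
      linarith
    rw [h1, h2]; simp
  rcases le_or_gt 1 t with ht1 | ht1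
  · have h1 : F ⁻¹' Set.Iic t = Set.univ := by
      ext z
      simp only [Set.mem_preimage, Set.mem_Iic, Set.mem_univ, iff_true]
      exact le_trans (ProbabilityTheory.cdf_le_one ν z) ht1
    have h2 : Set.Iic t ∩ Set.Icc (0:ℝ) 1 = Set.Icc 0 1 := by
      apply Set.inter_eq_self_of_subset_right
      exact fun z hz => le_trans hz.2 ht1
    rw [h1, h2, measure_univ, Real.volume_Icc]; simp
  · have hRHS : volume (Set.Iic t ∩ Set.Icc (0:ℝ) 1) = ENNReal.ofReal t := by
      have h : Set.Iic t ∩ Set.Icc (0:ℝ) 1 = Set.Icc 0 t := by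
        ext z
        simp only [Set.mem_inter_iff, Set.mem_Iic, Set.mem_Icc]
        constructor
        · rintro ⟨h1', h2', _⟩; exact ⟨h2', h1'⟩
        · rintro ⟨h1', h2'⟩; exact ⟨h2', h1', le_trans h2' ht1.le⟩
      rw [h, Real.volume_Icc, sub_zero]
    rw [hRHS]
    have hpre : F ⁻¹' Set.Iic t = {z | F z ≤ t} := rfl
    rw [hpre]
    by_cases hne : {z | F z ≤ t}.Nonempty
    · have hbdd : BddAbove {z | F z ≤ t} := by
        have hev : ∀ᶠ z in atTop, t < F z :=
          (ProbabilityTheory.tendsto_cdf_atTop ν).eventually_const_lt ht1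
        obtain ⟨M, hM⟩ := eventually_atTop.1 hev
        refine ⟨M, fun z hz => ?_⟩
        by_contra h
        push_neg at h
        exact absurd hz (not_le.2 (hM z h.le))
      set s := sSup {z | F z ≤ t} with hs
      have hFs_le : F s ≤ t := by
        by_cases hmem : s ∈ {z | F z ≤ t}
        · exact hmem
        · have hsub : Set.Iio s ⊆ {z | F z ≤ t} := by
            intro z hz
            obtain ⟨y, hy, hzy⟩ := exists_lt_of_lt_csSup hne hz
            exact le_trans (F.mono hzy.le) hy
          have hll : Function.leftLim F s ≤ t := by
            apply le_of_tendsto (F.mono.tendsto_leftLim s)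
            filter_upwards [self_mem_nhdsWithin] with z hz using hsub hz
          rw [← hcont s]; exact hll
      have hFs_ge : t ≤ F s := by
        by_contra h
        push_neg at h
        have hev : ∀ᶠ z in 𝓝[≥] s, F z < t :=
          Filter.Tendsto.eventually_lt_const h (F.right_continuous s)
        have h2 : ∀ᶠ z in 𝓝[>] s, F z < t :=
          hev.filter_mono (nhdsWithin_mono s Set.Ioi_subset_Ici_self)
        obtain ⟨z, hz1, hz2⟩ := (h2.and self_mem_nhdsWithin).exists
        exact absurd (le_csSup hbdd hz1.le) (not_le.2 hz2)
      have hset : {z | F z ≤ t} = Set.Iic s := by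
        ext z
        constructor
        · exact fun hz => le_csSup hbdd hz
        · exact fun hz => le_trans (F.mono hz) hFs_le
      rw [hset, ← ProbabilityTheory.ofReal_cdf ν s]
      rw [hFs_le.antisymm hFs_ge]
    · rw [Set.not_nonempty_iff_eq_empty.1 hne]
      have ht0 : t = 0 := by
        by_contra h
        have htpos : 0 < t := lt_of_le_of_ne ht (Ne.symm h)
        have hev : ∀ᶠ z in atBot, F z < t :=
          (ProbabilityTheory.tendsto_cdf_atBot ν).eventually_lt_const htpos
        obtain ⟨z, hz⟩ := hev.exists
        exact hne ⟨z, hz.le⟩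
      rw [ht0]; simp

end

end IsoAux

/-- Measure-space isomorphism onto unions of intervals: if the maximal diameter of the
cells of the joins `J_n = ⋁_{i=1}^n C_i` of Borel subsets of `[0,1]` tends to 0, then
there is a Borel map `φ : [0,1] → [0,1]` preserving Lebesgue measure, one-to-one on a
Borel set `V₁` of full measure with Borel image and measure-preserving Borel inverse,
such that each `φ(C_i)` coincides up to a Lebesgue-null set with a finite union of
intervals. -/
theorem isomorphism_to_interval_unions (C : ℕ → Set ℝ)
    (hmeas : ∀ i, MeasurableSet (C i)) (hsub : ∀ i, C i ⊆ Set.Icc (0 : ℝ) 1)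
    (hdiam : ∀ δ : ℝ, 0 < δ → ∃ N : ℕ, ∀ n ≥ N, ∀ ε : Fin n → Bool,
      EMetric.diam (joinCell C n ε) ≤ ENNReal.ofReal δ) :
    ∃ (φ : ℝ → ℝ) (V₁ : Set ℝ), Measurable φ ∧ MeasurableSet V₁ ∧
      V₁ ⊆ Set.Icc (0 : ℝ) 1 ∧ volume V₁ = 1 ∧
      (∀ x ∈ Set.Icc (0 : ℝ) 1, φ x ∈ Set.Icc (0 : ℝ) 1) ∧
      Measure.map φ (volume.restrict (Set.Icc (0 : ℝ) 1))
        = volume.restrict (Set.Icc (0 : ℝ) 1) ∧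
      Set.InjOn φ V₁ ∧ MeasurableSet (φ '' V₁) ∧
      (∃ ψ : ℝ → ℝ, Measurable ψ ∧ (∀ x ∈ V₁, ψ (φ x) = x) ∧
        Measure.map ψ (volume.restrict (Set.Icc (0 : ℝ) 1))
          = volume.restrict (Set.Icc (0 : ℝ) 1)) ∧
      (∀ i : ℕ, ∃ U : Set ℝ,
        (∃ S : Finset (ℝ × ℝ), U = ⋃ p ∈ S, Set.Icc p.1 p.2) ∧
        volume (symmDiff (φ '' C i) U) = 0) := by
  classical
  have hGmeas : Measurable (IsoAux.G C) := IsoAux.G_meas hmeas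
  set μ : Measure ℝ := volume.restrict (Set.Icc (0:ℝ) 1) with hμ
  haveI : IsProbabilityMeasure μ := by
    constructor; rw [hμ, Measure.restrict_apply_univ, Real.volume_Icc]; simp
  set ν : Measure ℝ := Measure.map (IsoAux.G C) μ with hν
  haveI : IsProbabilityMeasure ν := Measure.isProbabilityMeasure_map hGmeas.aemeasurable
  have hGinj : Set.InjOn (IsoAux.G C) (Set.Icc 0 1) := IsoAux.G_injOn hdiam
  have hatom : ∀ z : ℝ, ν {z} = 0 := by
    intro z
    rw [hν, Measure.map_apply hGmeas (measurableSet_singleton z), hμ,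
      Measure.restrict_apply (hGmeas (measurableSet_singleton z))]
    apply Set.Subsingleton.measure_zero
    intro a ha b hb
    exact hGinj ha.2 hb.2 (ha.1.trans hb.1.symm)
  set F := ProbabilityTheory.cdf ν with hFdef
  have hFmeas : Measurable F := F.mono.measurable
  have hmapF : Measure.map F ν = μ := by rw [hμ, hFdef]; exact IsoAux.map_cdf ν hatom
  set φ : ℝ → ℝ := fun x => F (IsoAux.G C x) with hφdef
  have hφmeas : Measurable φ := hFmeas.comp hGmeas
  have hmapφ : Measure.map φ μ = μ := by
    have h : φ = (F : ℝ → ℝ) ∘ IsoAux.G C := rfl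
    rw [h, ← Measure.map_map hFmeas hGmeas, ← hν, hmapF]
  have hφIcc : ∀ x, φ x ∈ Set.Icc (0:ℝ) 1 :=
    fun x => ⟨ProbabilityTheory.cdf_nonneg ν _, ProbabilityTheory.cdf_le_one ν _⟩
  set N : Set ℝ := ⋃ q : ℚ, IsoAux.G C ⁻¹' (F ⁻¹' {F (q:ℝ)}) with hNdef
  have hNmeas : MeasurableSet N :=
    MeasurableSet.iUnion fun q => hGmeas (hFmeas (measurableSet_singleton _))
  have hNnull : volume (N ∩ Set.Icc 0 1) = 0 := by
    have hμN : μ N = 0 := by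
      refine le_antisymm (le_trans (measure_iUnion_le _) ?_) zero_le
      have hq : ∀ q : ℚ, μ (IsoAux.G C ⁻¹' (F ⁻¹' {F (q:ℝ)})) = 0 := by
        intro q
        have h1 : μ (IsoAux.G C ⁻¹' (F ⁻¹' {F (q:ℝ)})) = ν (F ⁻¹' {F (q:ℝ)}) := by
          rw [hν, Measure.map_apply hGmeas (hFmeas (measurableSet_singleton _))]
        have h2 : ν (F ⁻¹' {F (q:ℝ)}) = (Measure.map F ν) {F (q:ℝ)} := by
          rw [Measure.map_apply hFmeas (measurableSet_singleton _)]
        rw [h1, h2, hmapF, hμ, Measure.restrict_apply (measurableSet_singleton _)]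
        refine le_antisymm (le_trans (measure_mono Set.inter_subset_left) ?_) zero_le
        simp
      simp [hq]
    rwa [hμ, Measure.restrict_apply hNmeas] at hμN
  set V₁ : Set ℝ := Set.Icc 0 1 \ N with hV₁def
  have hV₁meas : MeasurableSet V₁ := measurableSet_Icc.diff hNmeas
  have hV₁sub : V₁ ⊆ Set.Icc (0:ℝ) 1 := Set.diff_subset
  have hV₁vol : volume V₁ = 1 := by
    have h1 : V₁ = Set.Icc 0 1 \ (N ∩ Set.Icc 0 1) := by
      rw [hV₁def, Set.diff_inter_self_eq_diff]
    rw [h1, measure_diff_null hNnull, Real.volume_Icc]; simp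
  have hV₁null : volume (Set.Icc (0:ℝ) 1 \ V₁) = 0 := by
    refine le_antisymm (le_trans (measure_mono ?_) hNnull.le) zero_le
    rintro z ⟨hz1, hz2⟩
    rw [hV₁def] at hz2
    simp only [Set.mem_diff, not_and, not_not] at hz2
    exact ⟨hz2 hz1, hz1⟩
  have hφinj : Set.InjOn φ V₁ := by
    intro x hx y hy hφxy
    have hxy : F (IsoAux.G C x) = F (IsoAux.G C y) := hφxy
    rcases lt_trichotomy (IsoAux.G C x) (IsoAux.G C y) with h | h | h
    · exfalso
      obtain ⟨q, hq1, hq2⟩ := exists_rat_btwn h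
      have hFeq : F (IsoAux.G C x) = F (q:ℝ) :=
        le_antisymm (F.mono hq1.le) (le_of_le_of_eq (F.mono hq2.le) hxy.symm)
      refine hx.2 ?_
      rw [hNdef]
      exact Set.mem_iUnion.2 ⟨q, by
        simp only [Set.mem_preimage, Set.mem_singleton_iff]; exact hFeq⟩
    · exact hGinj (hV₁sub hx) (hV₁sub hy) h
    · exfalso
      obtain ⟨q, hq1, hq2⟩ := exists_rat_btwn h
      have hFeq : F (IsoAux.G C x) = F (q:ℝ) :=
        le_antisymm (hxy.trans_le (F.mono hq1.le)) (F.mono hq2.le)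
      refine hx.2 ?_
      rw [hNdef]
      exact Set.mem_iUnion.2 ⟨q, by
        simp only [Set.mem_preimage, Set.mem_singleton_iff]; exact hFeq⟩
  have himg : ∀ A : Set ℝ, MeasurableSet A →
      MeasurableSet (φ '' (V₁ ∩ A)) ∧ volume (φ '' (V₁ ∩ A)) = volume (V₁ ∩ A) := by
    intro A hA
    have hmB : MeasurableSet (φ '' (V₁ ∩ A)) :=
      (hV₁meas.inter hA).image_of_measurable_injOn hφmeas
        (hφinj.mono Set.inter_subset_left)
    refine ⟨hmB, ?_⟩
    have hBIcc : φ '' (V₁ ∩ A) ⊆ Set.Icc 0 1 := by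
      rintro _ ⟨x, _, rfl⟩; exact hφIcc x
    have h1 : volume (φ '' (V₁ ∩ A)) = volume (φ ⁻¹' (φ '' (V₁ ∩ A)) ∩ Set.Icc 0 1) := by
      have h2 : volume (φ '' (V₁ ∩ A)) = μ (φ '' (V₁ ∩ A)) := by
        rw [hμ, Measure.restrict_apply hmB, Set.inter_eq_self_of_subset_left hBIcc]
      rw [h2, ← hmapφ, Measure.map_apply hφmeas hmB, hμ,
        Measure.restrict_apply (hφmeas hmB)]
    rw [h1]
    apply le_antisymm
    · have hsub2 : φ ⁻¹' (φ '' (V₁ ∩ A)) ∩ Set.Icc 0 1 ⊆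
          (V₁ ∩ A) ∪ (Set.Icc 0 1 \ V₁) := by
        rintro z ⟨hz1, hz2⟩
        by_cases hzV : z ∈ V₁
        · left
          obtain ⟨x, hxmem, hxeq⟩ := hz1
          have hxz := hφinj hxmem.1 hzV hxeq
          rwa [← hxz]
        · right; exact ⟨hz2, hzV⟩
      calc volume (φ ⁻¹' (φ '' (V₁ ∩ A)) ∩ Set.Icc 0 1)
          ≤ volume ((V₁ ∩ A) ∪ (Set.Icc 0 1 \ V₁)) := measure_mono hsub2
        _ ≤ volume (V₁ ∩ A) + volume (Set.Icc 0 1 \ V₁) := measure_union_le _ _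
        _ = volume (V₁ ∩ A) := by rw [hV₁null, add_zero]
    · apply measure_mono
      intro z hz
      exact ⟨Set.subset_preimage_image φ _ hz, hV₁sub hz.1⟩
  haveI := hV₁meas.standardBorel
  have hemb : MeasurableEmbedding (fun x : V₁ => φ (x : ℝ)) := by
    apply Measurable.measurableEmbedding
    · exact hφmeas.comp measurable_subtype_coe
    · intro a b hab; exact Subtype.ext (hφinj a.2 b.2 hab)
  obtain ⟨ψ, hψmeas, hψeq⟩ := hemb.exists_measurable_extend
    (measurable_subtype_coe) (fun _ => ⟨(0:ℝ)⟩)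
  have hψ : ∀ x ∈ V₁, ψ (φ x) = x := fun x hx => congrFun hψeq ⟨x, hx⟩
  have hV₂meas : MeasurableSet (φ '' V₁) :=
    hV₁meas.image_of_measurable_injOn hφmeas hφinj
  have hV₂Icc : φ '' V₁ ⊆ Set.Icc (0:ℝ) 1 := by rintro _ ⟨x, _, rfl⟩; exact hφIcc x
  have hV₂vol : volume (φ '' V₁) = 1 := by
    have h0 : φ '' V₁ = φ '' (V₁ ∩ Set.univ) := by rw [Set.inter_univ]
    rw [h0, (himg _ MeasurableSet.univ).2, Set.inter_univ, hV₁vol]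
  have hV₂null : volume (Set.Icc (0:ℝ) 1 \ (φ '' V₁)) = 0 := by
    have h1 := measure_inter_add_diff (μ := volume) (Set.Icc (0:ℝ) 1) hV₂meas
    have h2 : volume (Set.Icc (0:ℝ) 1 ∩ (φ '' V₁)) = 1 := by
      rw [Set.inter_eq_self_of_subset_right hV₂Icc, hV₂vol]
    have h3 : volume (Set.Icc (0:ℝ) 1) = 1 := by rw [Real.volume_Icc]; simp
    rw [h2, h3] at h1
    have h4 : (1:ENNReal) + volume (Set.Icc (0:ℝ) 1 \ (φ '' V₁)) = 1 + 0 := by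
      rw [add_zero]; exact h1
    exact (ENNReal.add_right_inj ENNReal.one_ne_top).1 h4
  have hmapψ : Measure.map ψ μ = μ := by
    refine Measure.ext fun A hA => ?_
    rw [Measure.map_apply hψmeas hA, hμ, Measure.restrict_apply (hψmeas hA),
      Measure.restrict_apply hA]
    have hkey : ψ ⁻¹' A ∩ (φ '' V₁) = φ '' (V₁ ∩ A) := by
      ext t
      constructor
      · rintro ⟨ht, x, hx, rfl⟩
        refine ⟨x, ⟨hx, ?_⟩, rfl⟩
        rwa [Set.mem_preimage, hψ x hx] at ht
      · rintro ⟨x, ⟨hx, hxA⟩, rfl⟩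
        exact ⟨by rw [Set.mem_preimage, hψ x hx]; exact hxA, ⟨x, hx, rfl⟩⟩
    have h1 : volume (ψ ⁻¹' A ∩ Set.Icc 0 1) = volume (ψ ⁻¹' A ∩ (φ '' V₁)) := by
      apply le_antisymm
      · calc volume (ψ ⁻¹' A ∩ Set.Icc 0 1)
            ≤ volume ((ψ ⁻¹' A ∩ (φ '' V₁)) ∪ (Set.Icc 0 1 \ (φ '' V₁))) := by
              apply measure_mono
              rintro z ⟨hz1, hz2⟩
              by_cases h : z ∈ φ '' V₁
              · exact Or.inl ⟨hz1, h⟩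
              · exact Or.inr ⟨hz2, h⟩
          _ ≤ volume (ψ ⁻¹' A ∩ (φ '' V₁)) + volume (Set.Icc (0:ℝ) 1 \ (φ '' V₁)) :=
              measure_union_le _ _
          _ = volume (ψ ⁻¹' A ∩ (φ '' V₁)) := by rw [hV₂null, add_zero]
      · exact measure_mono fun z hz => ⟨hz.1, hV₂Icc hz.2⟩
    rw [h1, hkey, (himg A hA).2]
    apply le_antisymm
    · exact measure_mono fun z hz => ⟨hz.2, hV₁sub hz.1⟩
    · calc volume (A ∩ Set.Icc 0 1)
          ≤ volume ((V₁ ∩ A) ∪ (Set.Icc 0 1 \ V₁)) := by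
            apply measure_mono
            rintro z ⟨hz1, hz2⟩
            by_cases h : z ∈ V₁
            · exact Or.inl ⟨h, hz1⟩
            · exact Or.inr ⟨hz2, h⟩
        _ ≤ volume (V₁ ∩ A) + volume (Set.Icc (0:ℝ) 1 \ V₁) := measure_union_le _ _
        _ = volume (V₁ ∩ A) := by rw [hV₁null, add_zero]
  have hU : ∀ i : ℕ, ∃ U : Set ℝ,
      (∃ S : Finset (ℝ × ℝ), U = ⋃ p ∈ S, Set.Icc p.1 p.2) ∧
      volume (symmDiff (φ '' C i) U) = 0 := by
    intro i
    set S : Finset (ℝ × ℝ) :=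
      (Finset.univ : Finset (Fin i → Bool)).image
        (fun p => (F (IsoAux.aI i p), F (IsoAux.bI i p))) with hSdef
    set U : Set ℝ := ⋃ p : Fin i → Bool,
      Set.Icc (F (IsoAux.aI i p)) (F (IsoAux.bI i p)) with hUdef
    have hUS : U = ⋃ p ∈ S, Set.Icc p.1 p.2 := by
      ext z
      simp only [hUdef, hSdef, Set.mem_iUnion, Finset.mem_image, Finset.mem_univ, true_and]
      constructor
      · rintro ⟨p, hp⟩; exact ⟨_, ⟨p, rfl⟩, hp⟩
      · rintro ⟨pr, ⟨p, rfl⟩, hp⟩; exact ⟨p, hp⟩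
    refine ⟨U, ⟨S, hUS⟩, ?_⟩
    have hsub1 : φ '' C i ⊆ U := by
      rintro _ ⟨x, hx, rfl⟩
      obtain ⟨p, hp⟩ := Set.mem_iUnion.1 (IsoAux.mem_K_of_mem (C := C) hx)
      exact Set.mem_iUnion.2 ⟨p, F.mono hp.1, F.mono hp.2⟩
    have hB := himg (C i) (hmeas i)
    have hBU : φ '' (V₁ ∩ C i) ⊆ U :=
      (Set.image_mono Set.inter_subset_right).trans hsub1
    have hvolB : volume (φ '' (V₁ ∩ C i)) = volume (C i) := by
      rw [hB.2]
      apply le_antisymm (measure_mono Set.inter_subset_right)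
      calc volume (C i) ≤ volume ((V₁ ∩ C i) ∪ (Set.Icc 0 1 \ V₁)) := by
            apply measure_mono
            intro z hz
            by_cases h : z ∈ V₁
            · exact Or.inl ⟨h, hz⟩
            · exact Or.inr ⟨hsub i hz, h⟩
        _ ≤ volume (V₁ ∩ C i) + volume (Set.Icc (0:ℝ) 1 \ V₁) := measure_union_le _ _
        _ = volume (V₁ ∩ C i) := by rw [hV₁null, add_zero]
    have hUle : volume U ≤ volume (C i) := by
      have hstep2 : ∀ p : Fin i → Bool,
          volume (Set.Icc (F (IsoAux.aI i p)) (F (IsoAux.bI i p)))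
            = ν (Set.Ioc (IsoAux.aI i p) (IsoAux.bI i p)) := by
        intro p
        have h := StieltjesFunction.measure_Ioc (ProbabilityTheory.cdf ν)
          (IsoAux.aI i p) (IsoAux.bI i p)
        rw [ProbabilityTheory.measure_cdf] at h
        rw [Real.volume_Icc, hFdef]
        exact h.symm
      have hstep3 : ∑ p : Fin i → Bool, ν (Set.Ioc (IsoAux.aI i p) (IsoAux.bI i p))
          = ν (⋃ p : Fin i → Bool, Set.Ioc (IsoAux.aI i p) (IsoAux.bI i p)) := by
        rw [measure_iUnion (fun p q hpq => IsoAux.Ioc_disjoint hpq)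
          (fun p => measurableSet_Ioc), tsum_fintype]
      have hstep5 : ν (IsoAux.K i) = volume (C i) := by
        rw [hν, Measure.map_apply hGmeas (IsoAux.measurableSet_K i),
          IsoAux.preimage_K, hμ, Measure.restrict_apply (hmeas i),
          Set.inter_eq_self_of_subset_left (hsub i)]
      calc volume U
          ≤ ∑ p : Fin i → Bool,
              volume (Set.Icc (F (IsoAux.aI i p)) (F (IsoAux.bI i p))) := by
            rw [hUdef]; exact measure_iUnion_fintype_le _ _
        _ = ∑ p : Fin i → Bool, ν (Set.Ioc (IsoAux.aI i p) (IsoAux.bI i p)) :=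
            Finset.sum_congr rfl (fun p _ => hstep2 p)
        _ = ν (⋃ p : Fin i → Bool, Set.Ioc (IsoAux.aI i p) (IsoAux.bI i p)) := hstep3
        _ ≤ ν (IsoAux.K i) :=
            measure_mono (Set.iUnion_mono fun p => Set.Ioc_subset_Icc_self)
        _ = volume (C i) := hstep5
    have hBfin : volume (φ '' (V₁ ∩ C i)) ≠ ⊤ := by
      rw [hvolB]
      exact (lt_of_le_of_lt (measure_mono (hsub i))
        (by rw [Real.volume_Icc]; exact ENNReal.ofReal_lt_top)).ne
    have hdiffnull : volume (U \ (φ '' (V₁ ∩ C i))) = 0 := by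
      rw [measure_diff hBU hB.1.nullMeasurableSet hBfin]
      exact tsub_eq_zero_of_le (hUle.trans_eq hvolB.symm)
    refine le_antisymm ?_ zero_le
    calc volume (symmDiff (φ '' C i) U) ≤ volume (U \ (φ '' (V₁ ∩ C i))) := by
          apply measure_mono
          intro z hz
          rcases Set.mem_symmDiff.1 hz with ⟨hz1, hz2⟩ | ⟨hz1, hz2⟩
          · exact absurd (hsub1 hz1) hz2
          · exact ⟨hz1, fun hB' =>
              hz2 (Set.image_mono Set.inter_subset_right hB')⟩
      _ = 0 := hdiffnull
  exact ⟨φ, V₁, hφmeas, hV₁meas, hV₁sub, hV₁vol, fun x _ => hφIcc x, hmapφ, hφinj,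
    hV₂meas, ⟨ψ, hψmeas, hψ, hmapψ⟩, hU⟩
end
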